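/- Let g be a fractal sequence and ĝ(j) the position of the first occurrence of j in g. Then ĝ(j) = 1 + ∑_{i=0}^{j-1} s(i,j), where s(i,j) counts occurrences of i strictly before position ĝ(j), not counting the occurrence g(0) = 0 when i = 0. -/

import Mathlib

open Classical

noncomputable section

/-- The minimal excludant of a set of naturals. -/
def mex (S : Set ℕ) : ℕ := sInf {v | v ∉ S}

/-- A rule sequence is regular if `f 0 = 0`, `f n ≤ n`, and `f` increases by 0 or 1. -/
def Regular (f : ℕ → ℕ) : Prop :=
  f 0 = 0 ∧ (∀ n, f n ≤ n) ∧ ∀ n, f n ≤ f (n + 1) ∧ f (n + 1) ≤ f n + 1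

/-- `g` is the Grundy sequence for Maximum Nim with rule `f`:
`g n = mex { g (n - i) : 1 ≤ i ≤ f n }`. -/
def MaxNimGrundy (f g : ℕ → ℕ) : Prop :=
  ∀ n, g n = mex {v | ∃ i, 1 ≤ i ∧ i ≤ f n ∧ g (n - i) = v}

/-- `h` is the Grundy sequence for Minimum Nim with rule `f`:
`h n = mex { h i : 0 ≤ i ≤ n - f n - 1 }`. -/
def MinNimGrundy (f h : ℕ → ℕ) : Prop :=
  ∀ n, h n = mex {v | ∃ i, i + f n + 1 ≤ n ∧ h i = v}

/-- Every natural number occurs infinitely often. -/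
def Infinitive (g : ℕ → ℕ) : Prop := ∀ k, {n | g n = k}.Infinite

/-- The position of the first occurrence of `k` in `g`. -/
def firstOcc (g : ℕ → ℕ) (k : ℕ) : ℕ := sInf {n | g n = k}

/-- `n` is not the first occurrence of its value in `g`. -/
def NotFirst (g : ℕ → ℕ) (n : ℕ) : Prop := ∃ m < n, g m = g n

/-- The subsequence of `g` obtained by deleting the first occurrence of each value. -/
def Lam (g : ℕ → ℕ) : ℕ → ℕ := fun m => g (Nat.nth (NotFirst g) m)

/-- Kimberling's fractal sequences: infinitive, first occurrences in increasing
order of value (F2), and deleting first occurrences leaves the sequence unchanged (F3). -/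
def Fractal (g : ℕ → ℕ) : Prop :=
  Infinitive g ∧
  (∀ j k, j < k → firstOcc g j < firstOcc g k) ∧
  (∀ m, Lam g m = g m)

/-- The restriction `g|M`: the subsequence of terms of `g` lying in `M`. -/
def restrictSeq (g : ℕ → ℕ) (M : Set ℕ) : ℕ → ℕ :=
  fun m => g (Nat.nth (fun n => g n ∈ M) m)

/-- An interspersion: an infinitive sequence such that for `i < j` the restriction
`g|{i,j}` is an initial block of `i`'s followed by strict alternation `j, i, j, i, ...`. -/
def Interspersion (g : ℕ → ℕ) : Prop :=
  Infinitive g ∧ ∀ i j, i < j → ∃ N,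
    (∀ n < N, restrictSeq g {i, j} n = i) ∧
    ∀ n, restrictSeq g {i, j} (N + 2 * n) = j ∧
         restrictSeq g {i, j} (N + 2 * n + 1) = i

/-- `striangle g i j`: the number of occurrences of `i` strictly before the first
occurrence of `j`, not counting the occurrence `g 0 = 0` when `i = 0`. -/
def striangle (g : ℕ → ℕ) (i j : ℕ) : ℕ :=
  Set.ncard {n | g n = i ∧ n < firstOcc g j ∧ (i = 0 → n ≠ 0)}

/-- A subadditive triangle: `s i j + s j k - 1 ≤ s i k ≤ s i j + s j k` for `i < j < k`. -/
def SubadditiveTriangle (s : ℕ → ℕ → ℕ) : Prop :=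
  ∀ i j k, i < j → j < k →
    s i j + s j k ≤ s i k + 1 ∧ s i k ≤ s i j + s j k

/-- for a fractal sequence, the first occurrence of `j` is at position
`1 + ∑_{i<j} s(i,j)`. -/
theorem fractal_firstOcc_eq_column_sum (g : ℕ → ℕ) (hg : Fractal g) :
    ∀ j, 1 ≤ j → firstOcc g j = 1 + ∑ i ∈ Finset.range j, striangle g i j := by
  obtain ⟨hinf, hmono, _⟩ := hg
  have hne : ∀ k, {n | g n = k}.Nonempty := fun k => (hinf k).nonempty
  have hspec : ∀ k, g (firstOcc g k) = k := fun k => Nat.sInf_mem (hne k)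
  have hle : ∀ n, firstOcc g (g n) ≤ n := fun n => Nat.sInf_le rfl
  have hg0 : g 0 = 0 := by
    by_contra h
    have h1 := hle 0
    have h2 := hmono 0 (g 0) (Nat.pos_of_ne_zero h)
    omega
  have hmono' : ∀ a b, a ≤ b → firstOcc g a ≤ firstOcc g b := by
    intro a b hab
    rcases lt_or_eq_of_le hab with h | h
    · exact (hmono a b h).le
    · rw [h]
  intro j hj
  set F := firstOcc g j with hF
  have h00 : firstOcc g 0 = 0 := by
    have := hle 0
    rw [hg0] at this
    omega
  have hFpos : 0 < F := by
    have := hmono 0 j hj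
    omega
  have hlt : ∀ n, n < F → g n < j := by
    intro n hn
    by_contra h
    have h1 : F ≤ firstOcc g (g n) := hmono' j (g n) (by omega)
    have h2 := hle n
    omega
  have hcard : (Finset.range F).card =
      ∑ i ∈ Finset.range j, ((Finset.range F).filter (fun n => g n = i)).card := by
    apply Finset.card_eq_sum_card_fiberwise
    intro n hn
    simp only [Finset.mem_coe, Finset.mem_range] at *
    exact hlt n hn
  have hstri : ∀ i, striangle g i j =
      ((Finset.range F).filter (fun n => g n = i ∧ (i = 0 → n ≠ 0))).card := by
    intro i
    rw [striangle, show {n | g n = i ∧ n < firstOcc g j ∧ (i = 0 → n ≠ 0)} =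
      ↑((Finset.range F).filter (fun n => g n = i ∧ (i = 0 → n ≠ 0))) from by
        ext n; simp only [Finset.coe_filter, Finset.mem_range, Set.mem_setOf_eq, ← hF]; tauto]
    exact Set.ncard_coe_finset _
  have hstri_ne : ∀ i, i ≠ 0 → striangle g i j =
      ((Finset.range F).filter (fun n => g n = i)).card := by
    intro i hi
    rw [hstri i]
    congr 1
    apply Finset.filter_congr
    intro n _
    simp [hi]
  have hstri0 : striangle g 0 j + 1 = ((Finset.range F).filter (fun n => g n = 0)).card := by
    rw [hstri 0]
    have herase : (Finset.range F).filter (fun n => g n = 0 ∧ (0 = 0 → n ≠ 0)) =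
        ((Finset.range F).filter (fun n => g n = 0)).erase 0 := by
      ext n
      simp only [Finset.mem_filter, Finset.mem_erase, Finset.mem_range]
      tauto
    rw [herase, Finset.card_erase_of_mem (by simp [hFpos, hg0])]
    have hpos : 0 < ((Finset.range F).filter (fun n => g n = 0)).card :=
      Finset.card_pos.mpr ⟨0, by simp [hFpos, hg0]⟩
    omega
  have hsum : 1 + ∑ i ∈ Finset.range j, striangle g i j =
      ∑ i ∈ Finset.range j, ((Finset.range F).filter (fun n => g n = i)).card := by
    have h0mem : (0 : ℕ) ∈ Finset.range j := Finset.mem_range.mpr hj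
    rw [← Finset.add_sum_erase _ _ h0mem, ← Finset.add_sum_erase _ _ h0mem]
    rw [Finset.sum_congr rfl (fun i hi => hstri_ne i (Finset.ne_of_mem_erase hi))]
    omega
  rw [hsum, ← hcard, Finset.card_range]
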